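/- arXiv:1609.01930 — 4 statements merged into one kernel-verified Lean document; each statement's English description precedes it below -/
import Mathlib

section
/- Let k be a field of characteristic ≠ 2, let a, b ∈ k be nonzero, and let k_{a,b} denote the quotient field of k[x,y]/(a·x² + b·y² − 1). If an element f of k_{a,b} is algebraic over k, then f lies in (the canonical image of) k. In other words, the field of constants of k_{a,b} over k is equal to k. -/
noncomputable section Helpers
open Polynomial

lemma ratfunc_const {k : Type*} [Field k] (r : RatFunc k) (h : IsAlgebraic k r) :
    ∃ c : k, r = algebraMap k (RatFunc k) c := by
  have hint : IsIntegral k r := h.isIntegral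
  have hint2 : IsIntegral k[X] r := hint.tower_top
  obtain ⟨p, hp⟩ := IsIntegrallyClosed.isIntegral_iff.mp hint2
  have hpa : IsAlgebraic k p := by
    rw [← isAlgebraic_algebraMap_iff (IsFractionRing.injective k[X] (RatFunc k))]
    rw [hp]; exact h
  obtain ⟨m, hm0, hm⟩ := hpa
  rw [Polynomial.aeval_def, Polynomial.algebraMap_eq] at hm
  have : m.comp p = 0 := hm
  rcases (Polynomial.comp_eq_zero_iff).mp this with h1 | ⟨_, h2⟩
  · exact absurd h1 hm0
  · refine ⟨p.coeff 0, ?_⟩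
    rw [← hp, h2, IsScalarTower.algebraMap_apply k k[X] (RatFunc k), Polynomial.algebraMap_eq]; simp


lemma conic_sq_key {k : Type*} [Field k] (hchar : (2:k) ≠ 0) {a : k} (ha : a ≠ 0)
    (v : RatFunc k) (c : k) (hv : v ≠ 0)
    (h : v ^ 2 * algebraMap k[X] (RatFunc k) (1 - C a * X ^ 2) = algebraMap k (RatFunc k) c) :
    False := by
  set s : k[X] := 1 - C a * X ^ 2 with hs
  have hsdeg : s.natDegree = 2 := by
    have h2 : s = C (-a) * X ^ 2 + C 0 * X + C 1 := by
      rw [hs]; simp only [map_zero, map_one, zero_mul, add_zero, map_neg]; ring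
    rw [h2]
    exact Polynomial.natDegree_quadratic (by simpa using ha)
  have hs0 : s ≠ 0 := fun h0 => by simp [h0] at hsdeg
  have hder : derivative s = C (-(2 * a)) * X := by
    rw [hs]; simp; ring_nf; simp [← C_ofNat]
  have hsep : s.Separable := by
    refine ⟨1, C (-(2:k)⁻¹) * X, ?_⟩
    rw [hder, hs]
    have h2 : (-(2:k)⁻¹) * (-(2 * a)) = a := by field_simp
    calc 1 * (1 - C a * X ^ 2) + C (-(2:k)⁻¹) * X * (C (-(2 * a)) * X)
        = 1 - C a * X ^ 2 + C ((-(2:k)⁻¹) * (-(2 * a))) * X ^ 2 := by rw [C_mul]; ring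
      _ = 1 := by rw [h2]; ring
  have hsqf : Squarefree s := hsep.squarefree
  set n := v.num with hn
  set q := v.denom with hq
  have hq0 : q ≠ 0 := v.denom_ne_zero
  have hn0 : n ≠ 0 := RatFunc.num_ne_zero hv
  have hcop : IsCoprime n q := v.isCoprime_num_denom
  have hratmap : Function.Injective (algebraMap k[X] (RatFunc k)) :=
    IsFractionRing.injective _ _
  have heq : n ^ 2 * s = C c * q ^ 2 := by
    apply hratmap
    have hqim : (algebraMap k[X] (RatFunc k)) q ≠ 0 := fun h0 => hq0 (by
      simpa using hratmap (h0.trans (map_zero _).symm))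
    have hv' : v = algebraMap k[X] (RatFunc k) n / algebraMap k[X] (RatFunc k) q :=
      (RatFunc.num_div_denom v).symm
    have halg : algebraMap k (RatFunc k) c = algebraMap k[X] (RatFunc k) (C c) := by
      rw [IsScalarTower.algebraMap_apply k k[X] (RatFunc k), Polynomial.algebraMap_eq]
    rw [hv', halg] at h
    field_simp [hqim] at h
    rw [map_mul, map_mul, map_pow, map_pow, h, RatFunc.algebraMap_C]; ring
  have hc0 : c ≠ 0 := by
    rintro rfl
    rw [map_zero, zero_mul] at heq
    rcases mul_eq_zero.mp heq with h1 | h1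
    · exact hn0 (pow_eq_zero_iff (by norm_num) |>.mp h1)
    · exact hs0 h1
  have hdvd : q ^ 2 ∣ s := by
    have h1 : q ^ 2 ∣ s * n ^ 2 := ⟨C c, by rw [mul_comm] at heq ⊢; linear_combination heq⟩
    exact ((hcop.symm.pow).dvd_of_dvd_mul_right h1)
  have hqunit : IsUnit q := hsqf q (by rw [← sq]; exact hdvd)
  have hqdeg : q.natDegree = 0 := Polynomial.natDegree_eq_zero_of_isUnit hqunit
  have hdegs : (n ^ 2 * s).natDegree = 2 * n.natDegree + 2 := by
    rw [Polynomial.natDegree_mul (pow_ne_zero _ hn0) hs0, Polynomial.natDegree_pow, hsdeg]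
  have hdegr : (C c * q ^ 2).natDegree = 0 := by
    rw [Polynomial.natDegree_mul (by simpa using hc0) (pow_ne_zero _ hq0),
      Polynomial.natDegree_C, Polynomial.natDegree_pow, hqdeg]
  rw [heq, hdegr] at hdegs
  omega

lemma adjoinRoot_const {k : Type*} [Field k] (hchar : (2:k) ≠ 0) {a b : k} (ha : a ≠ 0)
    (hb : b ≠ 0) (d : RatFunc k)
    (hd : d = algebraMap k[X] (RatFunc k) (1 - C a * X ^ 2) / algebraMap k (RatFunc k) b)
    [Fact (Irreducible (X ^ 2 - C d : (RatFunc k)[X]))]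
    (w : AdjoinRoot (X ^ 2 - C d)) (hw : IsAlgebraic k w) :
    ∃ c : k, w = algebraMap k (AdjoinRoot (X ^ 2 - C d)) c := by
  have hmonic : (X ^ 2 - C d : (RatFunc k)[X]).Monic :=
    Polynomial.monic_X_pow_sub_C d (by norm_num)
  have hmdeg : (X ^ 2 - C d : (RatFunc k)[X]).degree = 2 :=
    Polynomial.degree_X_pow_sub_C (by norm_num) d
  have hofinj : Function.Injective (algebraMap (RatFunc k) (AdjoinRoot (X ^ 2 - C d))) :=
    (algebraMap (RatFunc k) (AdjoinRoot (X ^ 2 - C d))).injective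
  have htwo : (2 : RatFunc k) ≠ 0 := by
    have h2 : algebraMap k (RatFunc k) 2 = 2 := map_ofNat _ 2
    intro h0
    exact hchar ((algebraMap k (RatFunc k)).injective (by rw [map_zero, h2, h0]))
  obtain ⟨g, hg⟩ := AdjoinRoot.mk_surjective (g := (X ^ 2 - C d : (RatFunc k)[X])) w
  set r : (RatFunc k)[X] := g %ₘ (X ^ 2 - C d) with hr
  have hwr : w = AdjoinRoot.mk (X ^ 2 - C d) r := by
    rw [← hg]
    conv_lhs => rw [← Polynomial.modByMonic_add_div g (X ^ 2 - C d)]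
    rw [map_add, map_mul, AdjoinRoot.mk_self, zero_mul, add_zero]
  have hrdeg : r.degree ≤ 1 := by
    have h2 : r.degree < 2 := hmdeg ▸ Polynomial.degree_modByMonic_lt g hmonic
    rcases eq_or_ne r 0 with h0 | h0
    · rw [h0, Polynomial.degree_zero]; exact bot_le
    · rw [Polynomial.degree_eq_natDegree h0] at h2 ⊢
      exact_mod_cast Nat.lt_succ_iff.mp (by exact_mod_cast h2)
  set u : RatFunc k := r.coeff 0 with hu
  set v : RatFunc k := r.coeff 1 with hv
  have hrform : r = C v * X + C u := Polynomial.eq_X_add_C_of_degree_le_one hrdeg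
  have hroot2 : (AdjoinRoot.root (X ^ 2 - C d)) ^ 2
      = algebraMap (RatFunc k) (AdjoinRoot (X ^ 2 - C d)) d := by
    rw [AdjoinRoot.algebraMap_eq]
    exact root_X_pow_sub_C_pow 2 d
  have hwform : w = algebraMap (RatFunc k) _ v * AdjoinRoot.root (X ^ 2 - C d)
      + algebraMap (RatFunc k) _ u := by
    rw [hwr, hrform, map_add, map_mul, AdjoinRoot.mk_X, AdjoinRoot.mk_C, AdjoinRoot.mk_C,
      AdjoinRoot.algebraMap_eq]
  have hσ0 : eval₂ (AdjoinRoot.of (X ^ 2 - C d)) (-AdjoinRoot.root (X ^ 2 - C d))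
      (X ^ 2 - C d : (RatFunc k)[X]) = 0 := by
    rw [eval₂_sub, eval₂_pow, eval₂_X, eval₂_C, even_two.neg_pow,
      ← AdjoinRoot.algebraMap_eq, hroot2]
    ring
  set σ := AdjoinRoot.lift (AdjoinRoot.of (X ^ 2 - C d)) (-AdjoinRoot.root (X ^ 2 - C d)) hσ0
    with hσdef
  have hσof : ∀ x : RatFunc k, σ (algebraMap (RatFunc k) _ x) = algebraMap (RatFunc k) _ x := by
    intro x; rw [AdjoinRoot.algebraMap_eq]; exact AdjoinRoot.lift_of hσ0
  have hσk : σ.comp (algebraMap k (AdjoinRoot (X ^ 2 - C d)))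
      = algebraMap k (AdjoinRoot (X ^ 2 - C d)) := by
    ext c
    rw [RingHom.comp_apply, IsScalarTower.algebraMap_apply k (RatFunc k) (AdjoinRoot (X ^ 2 - C d))]
    exact hσof _
  have hσroot : σ (AdjoinRoot.root (X ^ 2 - C d)) = -AdjoinRoot.root (X ^ 2 - C d) :=
    AdjoinRoot.lift_root hσ0
  have hσalg : IsAlgebraic k (σ w) := by
    obtain ⟨p, hp0, hp⟩ := hw
    refine ⟨p, hp0, ?_⟩
    rw [Polynomial.aeval_def] at hp ⊢
    calc eval₂ (algebraMap k _) (σ w) p = σ (eval₂ (algebraMap k _) w p) := by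
          rw [Polynomial.hom_eval₂, hσk]
      _ = 0 := by rw [hp, map_zero]
  have hv0 : v = 0 := by
    by_contra hvne
    have hz : w - σ w = algebraMap (RatFunc k) _ (2 * v) * AdjoinRoot.root (X ^ 2 - C d) := by
      rw [hwform, RingHom.map_add σ, RingHom.map_mul σ, hσof, hσof, hσroot, map_mul, map_ofNat]
      ring
    have hzint : IsIntegral k (w - σ w) := (hw.isIntegral).sub (hσalg.isIntegral)
    have hzsq : (w - σ w) ^ 2 = algebraMap (RatFunc k) _ ((2 * v) ^ 2 * d) := by
      rw [hz, mul_pow, hroot2, ← map_pow, ← map_mul]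
    have halg2 : IsAlgebraic k ((2 * v) ^ 2 * d) := by
      rw [← isAlgebraic_algebraMap_iff hofinj, ← hzsq]
      exact (hzint.pow 2).isAlgebraic
    obtain ⟨c2, hc2⟩ := ratfunc_const _ halg2
    have hBne : algebraMap k (RatFunc k) b ≠ 0 := by
      simpa using (algebraMap k (RatFunc k)).injective.ne hb
    have hkey : (2 * v) ^ 2 * algebraMap k[X] (RatFunc k) (1 - C a * X ^ 2)
        = algebraMap k (RatFunc k) (c2 * b) := by
      rw [map_mul, ← hc2, hd]
      have hCb : (RatFunc.C b : RatFunc k) ≠ 0 := by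
        rw [← RatFunc.algebraMap_eq_C]; exact hBne
      field_simp
    exact conic_sq_key hchar ha (2 * v) (c2 * b) (mul_ne_zero htwo hvne) hkey
  rw [hv0, map_zero, zero_mul, zero_add] at hwform
  have hualg : IsAlgebraic k u := by
    rw [← isAlgebraic_algebraMap_iff hofinj, ← hwform]; exact hw
  obtain ⟨c, hc⟩ := ratfunc_const _ hualg
  exact ⟨c, by
    rw [hwform, hc, IsScalarTower.algebraMap_apply k (RatFunc k) (AdjoinRoot (X ^ 2 - C d))]⟩

end Helpers


open MvPolynomial

noncomputable section

/-- The defining polynomial `a·x² + b·y² − 1` of the affine conic. -/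
def conicPoly (k : Type*) [Field k] (a b : k) : MvPolynomial (Fin 2) k :=
  C a * X 0 ^ 2 + C b * X 1 ^ 2 - 1

lemma conic_X0_transcendental {k : Type*} [Field k] {a b : k} (hb : b ≠ 0)
    (p : Polynomial k) (hp : p ≠ 0) :
    Polynomial.eval₂ MvPolynomial.C (X 0) p ∉ Ideal.span {conicPoly k a b} := by
  intro hmem
  obtain ⟨g, hg⟩ := Ideal.mem_span_singleton'.mp hmem
  -- θ : MvPolynomial (Fin 2) k →+* (k[X])[X], X0 ↦ C X, X1 ↦ X
  let PC : Polynomial k →+* Polynomial (Polynomial k) := Polynomial.C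
  let θ : MvPolynomial (Fin 2) k →+* Polynomial (Polynomial k) :=
    eval₂Hom (PC.comp Polynomial.C) (fun i => if i = 0 then PC Polynomial.X else Polynomial.X)
  have hθtop : θ (Polynomial.eval₂ MvPolynomial.C (X 0) p) = PC p := by
    rw [Polynomial.hom_eval₂]
    have : θ (X 0 : MvPolynomial (Fin 2) k) = PC Polynomial.X := by simp [θ]
    rw [this]
    have h2 : PC p = PC (Polynomial.eval₂ Polynomial.C Polynomial.X p) := by
      rw [Polynomial.eval₂_C_X]
    rw [h2, Polynomial.hom_eval₂]
    congr 1
    ext r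
    simp [θ, PC]
  have hθq : θ (conicPoly k a b) =
      Polynomial.C (Polynomial.C b) * Polynomial.X ^ 2
        + Polynomial.C (Polynomial.C a * Polynomial.X ^ 2 - 1) := by
    simp [conicPoly, θ, PC]
    ring
  have hQdeg : (θ (conicPoly k a b)).natDegree = 2 := by
    rw [hθq]
    rw [Polynomial.natDegree_add_eq_left_of_natDegree_lt]
    · exact Polynomial.natDegree_C_mul_X_pow 2 _ (by simpa using hb)
    · rw [Polynomial.natDegree_C_mul_X_pow 2 _ (by simpa using hb), Polynomial.natDegree_C]
      norm_num
  have hQ0 : θ (conicPoly k a b) ≠ 0 := fun h0 => by simp [h0] at hQdeg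
  have hmain : PC p = θ g * θ (conicPoly k a b) := by
    rw [← hθtop, ← hg, map_mul]
  have hθg0 : θ g ≠ 0 := by
    intro h0
    rw [h0, zero_mul] at hmain
    exact hp (by simpa [PC, Polynomial.C_eq_zero] using hmain)
  have := congrArg Polynomial.natDegree hmain
  rw [Polynomial.natDegree_mul hθg0 hQ0, hQdeg] at this
  simp [PC, Polynomial.natDegree_C] at this

/-- The coordinate ring `k[x,y]/(a·x² + b·y² − 1)` of the affine conic. -/
abbrev ConicRing (k : Type*) [Field k] (a b : k) : Type _ :=
  MvPolynomial (Fin 2) k ⧸ Ideal.span {conicPoly k a b}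

/-- `K` (together with the embedding `ι : k →+* K`) is a model of the function field
`k_{a,b}`, i.e. the quotient field of `k[x,y]/(a·x² + b·y² − 1)`. -/
def IsConicFunctionField (k : Type*) [Field k] (a b : k)
    (K : Type*) [Field K] (ι : k →+* K) : Prop :=
  ∃ f : ConicRing k a b →+* K,
    Function.Injective f ∧
    f.comp (algebraMap k (ConicRing k a b)) = ι ∧
    ∀ z : K, ∃ p q : ConicRing k a b, f q ≠ 0 ∧ z = f p / f q

/-- The subgroup of squares in `Kˣ`. -/
def sqSubgroup (K : Type*) [Field K] : Subgroup Kˣ :=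
  MonoidHom.range (powMonoidHom 2 : Kˣ →* Kˣ)

/-- The square class group `Kˣ/Kˣ²`. -/
abbrev SqClass (K : Type*) [Field K] := Kˣ ⧸ sqSubgroup K

/-- The square class of a unit. -/
def sqCl {K : Type*} [Field K] (u : Kˣ) : SqClass K := QuotientGroup.mk u

/-- `α : Kˣ/Kˣ² → Lˣ/Lˣ²` is a Witt equivalence: it sends `-1` to `-1` and preserves
binary value sets. -/
structure IsWittEquiv {K L : Type*} [Field K] [Field L]
    (α : SqClass K ≃* SqClass L) : Prop where
  map_neg_one : α (sqCl (-1)) = sqCl (-1)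
  represents : ∀ (a b c : Kˣ) (a' b' c' : Lˣ),
    α (sqCl a) = sqCl a' → α (sqCl b) = sqCl b' → α (sqCl c) = sqCl c' →
    ((∃ x y : K, (c : K) = (a : K) * x ^ 2 + (b : K) * y ^ 2) ↔
      (∃ x y : L, (c' : L) = (a' : L) * x ^ 2 + (b' : L) * y ^ 2))

/-- Two fields are Witt equivalent if there is a Witt equivalence between them. -/
def WittEquivalent (K L : Type*) [Field K] [Field L] : Prop :=
  ∃ α : SqClass K ≃* SqClass L, IsWittEquiv α

/-- An ordering of a field `F`. -/
structure IsOrdering {F : Type*} [Field F] (P : Set F) : Prop where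
  add_mem : ∀ x ∈ P, ∀ y ∈ P, x + y ∈ P
  mul_mem : ∀ x ∈ P, ∀ y ∈ P, x * y ∈ P
  total : ∀ x : F, x ∈ P ∨ -x ∈ P
  antisymm : ∀ x : F, x ∈ P → -x ∈ P → x = 0


set_option maxHeartbeats 1000000 in
set_option synthInstance.maxHeartbeats 400000 in
/-- Let `k` be a field of characteristic `≠ 2`, `a, b ∈ k` nonzero, and let `K` (with
embedding `ι : k →+* K`) be the quotient field `k_{a,b}` of `k[x,y]/(a·x² + b·y² − 1)`.
If `f ∈ K` is algebraic over `k`, then `f` lies in the image of `k`: the field of constants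
of `k_{a,b}` over `k` is `k` itself. -/
theorem conicFunctionField_constants
    (k : Type*) [Field k] (hchar : (2 : k) ≠ 0)
    (a b : k) (ha : a ≠ 0) (hb : b ≠ 0)
    (K : Type*) [Field K] (ι : k →+* K)
    (hK : IsConicFunctionField k a b K ι)
    (f : K) (halg : ∃ p : Polynomial k, p ≠ 0 ∧ Polynomial.eval₂ ι f p = 0) :
    ∃ c : k, f = ι c := by
  classical
  obtain ⟨F, hFinj, hFcomp, hFsurj⟩ := hK
  set s : Polynomial k := 1 - Polynomial.C a * Polynomial.X ^ 2 with hs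
  have hs0 : s ≠ 0 := by
    intro h0
    have h1 : s.coeff 0 = 1 := by rw [hs]; simp
    rw [h0] at h1; simp at h1
  have hS0 : algebraMap (Polynomial k) (RatFunc k) s ≠ 0 := by
    simpa using (IsFractionRing.injective (Polynomial k) (RatFunc k)).ne hs0
  have hB0 : algebraMap k (RatFunc k) b ≠ 0 := by
    simpa using (algebraMap k (RatFunc k)).injective.ne hb
  set d : RatFunc k := algebraMap (Polynomial k) (RatFunc k) s / algebraMap k (RatFunc k) b
    with hd
  have hd0 : d ≠ 0 := div_ne_zero hS0 hB0
  have hsq : ∀ e : RatFunc k, e ^ 2 ≠ d := by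
    intro e he
    have he0 : e ≠ 0 := by rintro rfl; rw [← he] at hd0; simp at hd0
    refine conic_sq_key hchar ha e⁻¹ b (inv_ne_zero he0) ?_
    rw [hd] at he
    have hSe : algebraMap (Polynomial k) (RatFunc k) s
        = e ^ 2 * algebraMap k (RatFunc k) b := (div_eq_iff hB0).mp he.symm
    rw [← hs, hSe, inv_pow]
    field_simp
  have hirr : Irreducible (Polynomial.X ^ 2 - Polynomial.C d) :=
    X_pow_sub_C_irreducible_of_prime Nat.prime_two hsq
  haveI : Fact (Irreducible (Polynomial.X ^ 2 - Polynomial.C d)) := ⟨hirr⟩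
  set mkC : MvPolynomial (Fin 2) k →+* ConicRing k a b :=
    Ideal.Quotient.mk (Ideal.span {conicPoly k a b}) with hmkCdef
  have hCa : ∀ c : k, F (mkC (MvPolynomial.C c)) = ι c := by
    intro c
    have h1 : mkC (MvPolynomial.C c) = algebraMap k (ConicRing k a b) c := rfl
    rw [h1, ← hFcomp]; rfl
  set g : Polynomial k →+* K :=
    F.comp (mkC.comp (Polynomial.eval₂RingHom MvPolynomial.C (X 0))) with hgdef
  have hgapply : ∀ p : Polynomial k,
      g p = F (mkC (Polynomial.eval₂ MvPolynomial.C (X 0) p)) := fun p => rfl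
  have hgne : ∀ p : Polynomial k, p ≠ 0 → g p ≠ 0 := by
    intro p hp h0
    refine conic_X0_transcendental (a := a) hb p hp ?_
    rw [← Ideal.Quotient.eq_zero_iff_mem]
    apply hFinj
    rw [map_zero]
    exact h0
  have hgmon : nonZeroDivisors (Polynomial k) ≤ Submonoid.comap g (nonZeroDivisors K) := by
    intro p hp
    simp only [Submonoid.mem_comap]
    exact mem_nonZeroDivisors_of_ne_zero (hgne p (nonZeroDivisors.ne_zero hp))
  set Θ : RatFunc k →+* K := RatFunc.liftRingHom g hgmon with hΘdef
  have hΘa : ∀ p : Polynomial k, Θ (algebraMap (Polynomial k) (RatFunc k) p) = g p := by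
    intro p
    have h1 := RatFunc.liftRingHom_apply_div g hgmon p 1
    rw [map_one, map_one, div_one, div_one] at h1; exact h1
  have hΘk : ∀ c : k, Θ (algebraMap k (RatFunc k) c) = ι c := by
    intro c
    rw [IsScalarTower.algebraMap_apply k (Polynomial k) (RatFunc k), hΘa, hgapply,
      Polynomial.algebraMap_eq, Polynomial.eval₂_C, hCa]
  have hmk0 : mkC (conicPoly k a b) = 0 :=
    Ideal.Quotient.eq_zero_iff_mem.mpr (Ideal.subset_span rfl)
  have hrel : ι a * F (mkC (X 0)) ^ 2 + ι b * F (mkC (X 1)) ^ 2 = 1 := by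
    have h1 : F (mkC (C a * X 0 ^ 2 + C b * X 1 ^ 2 - 1)) = 0 := by
      rw [show (C a * X 0 ^ 2 + C b * X 1 ^ 2 - 1 : MvPolynomial (Fin 2) k)
        = conicPoly k a b from rfl, hmk0, map_zero]
    simp only [map_sub, map_add, map_mul, map_pow, map_one] at h1
    rw [hCa, hCa] at h1
    linear_combination h1
  have hιb : ι b ≠ 0 := by
    simpa using ι.injective.ne hb
  have hΘd : Θ d = (1 - ι a * F (mkC (X 0)) ^ 2) / ι b := by
    rw [hd, map_div₀, hΘa, hΘk, hgapply, hs]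
    congr 1
    rw [Polynomial.eval₂_sub, Polynomial.eval₂_one, Polynomial.eval₂_mul, Polynomial.eval₂_C,
      Polynomial.eval₂_pow, Polynomial.eval₂_X]
    simp only [map_sub, map_mul, map_pow, map_one, hCa]
  have hy2 : Polynomial.eval₂ Θ (F (mkC (X 1))) (Polynomial.X ^ 2 - Polynomial.C d) = 0 := by
    rw [Polynomial.eval₂_sub, Polynomial.eval₂_pow, Polynomial.eval₂_X, Polynomial.eval₂_C, hΘd]
    rw [sub_eq_zero, eq_div_iff hιb]
    linear_combination hrel
  set Ψ : AdjoinRoot (Polynomial.X ^ 2 - Polynomial.C d) →+* K :=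
    AdjoinRoot.lift Θ (F (mkC (X 1))) hy2 with hΨdef
  have hΨof : ∀ r : RatFunc k,
      Ψ (algebraMap (RatFunc k) (AdjoinRoot (Polynomial.X ^ 2 - Polynomial.C d)) r) = Θ r := by
    intro r; rw [AdjoinRoot.algebraMap_eq]; exact AdjoinRoot.lift_of hy2
  have hΨroot : Ψ (AdjoinRoot.root (Polynomial.X ^ 2 - Polynomial.C d)) = F (mkC (X 1)) :=
    AdjoinRoot.lift_root hy2
  have hΨι : ∀ c : k,
      Ψ (algebraMap k (AdjoinRoot (Polynomial.X ^ 2 - Polynomial.C d)) c) = ι c := by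
    intro c
    rw [IsScalarTower.algebraMap_apply k (RatFunc k)
      (AdjoinRoot (Polynomial.X ^ 2 - Polynomial.C d)), hΨof, hΘk]
  set ev : MvPolynomial (Fin 2) k →+* AdjoinRoot (Polynomial.X ^ 2 - Polynomial.C d) :=
    MvPolynomial.eval₂Hom
      ((algebraMap (RatFunc k) (AdjoinRoot (Polynomial.X ^ 2 - Polynomial.C d))).comp
        (algebraMap k (RatFunc k)))
      (fun i => if i = 0
        then algebraMap (RatFunc k) (AdjoinRoot (Polynomial.X ^ 2 - Polynomial.C d)) RatFunc.X
        else AdjoinRoot.root (Polynomial.X ^ 2 - Polynomial.C d)) with hevdef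
  have hcomm : Ψ.comp ev = F.comp mkC := by
    apply MvPolynomial.ringHom_ext
    · intro c
      rw [RingHom.comp_apply, RingHom.comp_apply, hevdef]
      rw [MvPolynomial.eval₂Hom_C, RingHom.comp_apply, hΨof, hΘk, hCa]
    · intro i
      match i with
      | 0 =>
        rw [RingHom.comp_apply, RingHom.comp_apply, hevdef, MvPolynomial.eval₂Hom_X']
        rw [if_pos rfl, hΨof, ← RatFunc.algebraMap_X, hΘa, hgapply, Polynomial.eval₂_X]
      | 1 =>
        rw [RingHom.comp_apply, RingHom.comp_apply, hevdef, MvPolynomial.eval₂Hom_X']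
        rw [if_neg (by decide), hΨroot]
  have hcomm' : ∀ P : MvPolynomial (Fin 2) k, F (mkC P) = Ψ (ev P) := by
    intro P
    have := RingHom.congr_fun hcomm P
    exact this.symm
  obtain ⟨p, q, hq0, hzeq⟩ := hFsurj f
  obtain ⟨P, hP⟩ := Ideal.Quotient.mk_surjective (I := Ideal.span {conicPoly k a b}) p
  obtain ⟨Q, hQ⟩ := Ideal.Quotient.mk_surjective (I := Ideal.span {conicPoly k a b}) q
  set w := ev P / ev Q with hwdef
  have hf : f = Ψ w := by
    rw [hwdef, map_div₀, ← hcomm' P, ← hcomm' Q]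
    rw [hmkCdef] at *
    rw [hP, hQ, ← hzeq]
  obtain ⟨pol, hpol0, hpol⟩ := halg
  have hΨcomp : Ψ.comp (algebraMap k (AdjoinRoot (Polynomial.X ^ 2 - Polynomial.C d))) = ι :=
    RingHom.ext hΨι
  have hwalg : IsAlgebraic k w := by
    refine ⟨pol, hpol0, ?_⟩
    apply Ψ.injective
    rw [map_zero, Polynomial.aeval_def, Polynomial.hom_eval₂, hΨcomp, ← hf]
    exact hpol
  obtain ⟨c, hc⟩ := adjoinRoot_const hchar ha hb d (by rw [hd, hs]) w hwalg
  exact ⟨c, by rw [hf, hc, hΨι]⟩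

end
end

section
/- Let k be a field of characteristic ≠ 2 and let a, b ∈ k be nonzero. Then the conic a·x² + b·y² = 1 has a rational point (i.e., there exist p, q ∈ k with a·p² + b·q² = 1) if and only if k_{a,b} is purely transcendental of transcendence degree 1 over k, i.e., k_{a,b} is k-algebra isomorphic to the rational function field k(t). -/
open MvPolynomial

noncomputable section

lemma conic_not_dvd {k : Type*} [Field k] {a b : k} (hb : b ≠ 0)
    {P : Polynomial k} (hP : P ≠ 0) :
    ¬ conicPoly k a b ∣ Polynomial.eval₂ MvPolynomial.C (X 0) P := by
  intro hdvd
  set Φ : MvPolynomial (Fin 2) k →+* Polynomial (Polynomial k) :=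
    MvPolynomial.eval₂Hom (Polynomial.C.comp Polynomial.C)
      (fun i => if i = 0 then Polynomial.C Polynomial.X else Polynomial.X) with hΦ
  have h2 : Φ (Polynomial.eval₂ MvPolynomial.C (X 0) P) = Polynomial.C P := by
    rw [Polynomial.hom_eval₂]
    have e1 : Φ.comp (MvPolynomial.C : k →+* MvPolynomial (Fin 2) k)
        = Polynomial.C.comp Polynomial.C := by
      ext r : 1
      simp [hΦ]
    have e2 : Φ (X 0) = Polynomial.C Polynomial.X := by simp [hΦ]
    rw [e1, e2, ← Polynomial.hom_eval₂, Polynomial.eval₂_C_X]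
  have h1 : Φ (conicPoly k a b) =
      Polynomial.C (Polynomial.C b) * Polynomial.X ^ 2 + Polynomial.C 0 * Polynomial.X
        + Polynomial.C (Polynomial.C a * Polynomial.X ^ 2 - 1) := by
    simp [conicPoly, hΦ, map_sub, map_add, map_mul, map_one]
    ring
  have hdeg : (Φ (conicPoly k a b)).degree = 2 := by
    rw [h1]
    exact Polynomial.degree_quadratic (Polynomial.C_ne_zero.mpr hb)
  have hdvd2 : Φ (conicPoly k a b) ∣ Polynomial.C P := h2 ▸ map_dvd Φ hdvd
  have hle := Polynomial.degree_le_of_dvd hdvd2 (Polynomial.C_ne_zero.mpr hP)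
  rw [hdeg] at hle
  have := hle.trans Polynomial.degree_C_le
  norm_num at this

/-- Let `k` be a field of characteristic `≠ 2` and `a, b ∈ k` nonzero, and let `K` (with
embedding `ι : k →+* K`) be the function field `k_{a,b}`.  The conic `a·x² + b·y² = 1` has
a rational point over `k` if and only if `k_{a,b}` is purely transcendental over `k`, i.e.
`k`-algebra isomorphic to the rational function field `k(t)`. -/
theorem conicFunctionField_rationalPoint_iff_purelyTranscendental
    (k : Type*) [Field k] (hchar : (2 : k) ≠ 0)
    (a b : k) (ha : a ≠ 0) (hb : b ≠ 0)
    (K : Type*) [Field K] (ι : k →+* K)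
    (hK : IsConicFunctionField k a b K ι) :
    (∃ p q : k, a * p ^ 2 + b * q ^ 2 = 1) ↔
      ∃ e : K ≃+* RatFunc k, ∀ c : k, e (ι c) = RatFunc.C c := by
  obtain ⟨f, hfinj, hfcomp, hfrac⟩ := hK
  have hι : Function.Injective ι := ι.injective
  letI : Algebra k K := ι.toAlgebra
  have halg : algebraMap k K = ι := rfl
  set F2 : MvPolynomial (Fin 2) k →+* K := f.comp (Ideal.Quotient.mk _) with hF2def
  have hF2C : ∀ c : k, F2 (MvPolynomial.C c) = ι c := by
    intro c
    have h : algebraMap k (ConicRing k a b) c = Ideal.Quotient.mk _ (MvPolynomial.C c) := rfl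
    calc F2 (MvPolynomial.C c) = f (algebraMap k (ConicRing k a b) c) := by rw [h]; rfl
      _ = ι c := by rw [← hfcomp]; rfl
  set xb : K := F2 (X 0) with hxbdef
  set yb : K := F2 (X 1) with hybdef
  have hrel : ι a * xb ^ 2 + ι b * yb ^ 2 = 1 := by
    have h0 : F2 (conicPoly k a b) = 0 := by
      have h : (Ideal.Quotient.mk (Ideal.span {conicPoly k a b})) (conicPoly k a b) = 0 :=
        Ideal.Quotient.eq_zero_iff_mem.mpr (Ideal.subset_span rfl)
      simp only [hF2def, RingHom.comp_apply, h, map_zero]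
    have h1 : ι a * xb ^ 2 + ι b * yb ^ 2 - 1 = 0 := by
      rw [← hF2C a, ← hF2C b]
      simpa only [conicPoly, map_sub, map_add, map_mul, map_pow, map_one] using h0
    linear_combination h1
  have htransx : Transcendental k xb := by
    rintro ⟨P, hP, hPeval⟩
    have heq : F2 (Polynomial.eval₂ MvPolynomial.C (X 0) P) = 0 := by
      rw [Polynomial.hom_eval₂]
      have e1 : F2.comp (MvPolynomial.C : k →+* MvPolynomial (Fin 2) k) = ι := by
        ext r : 1; exact hF2C r
      rw [e1]
      rw [Polynomial.aeval_def, halg] at hPeval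
      exact hPeval
    have hker : Ideal.Quotient.mk (Ideal.span {conicPoly k a b})
        (Polynomial.eval₂ MvPolynomial.C (X 0) P) = 0 := by
      apply hfinj
      rw [map_zero]
      exact heq
    have hmem := Ideal.Quotient.eq_zero_iff_mem.mp hker
    exact conic_not_dvd hb hP (Ideal.mem_span_singleton.mp hmem)
  constructor
  · rintro ⟨p, q, hpq⟩
    have hιa : ι a ≠ 0 := fun h => ha (hι (h.trans (map_zero ι).symm))
    have hrel2 : ι a * ι p ^ 2 + ι b * ι q ^ 2 = 1 := by
      rw [← map_pow, ← map_pow, ← map_mul, ← map_mul, ← map_add, hpq, map_one]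
    have hxnp : xb - ι p ≠ 0 := by
      rw [sub_ne_zero]
      intro h
      apply htransx
      exact ⟨Polynomial.X - Polynomial.C p, Polynomial.X_sub_C_ne_zero p, by
        rw [map_sub, Polynomial.aeval_X, Polynomial.aeval_C, halg, h, sub_self]⟩
    obtain ⟨τ, hτdef⟩ : ∃ t : K, t = (yb - ι q) / (xb - ι p) := ⟨_, rfl⟩
    have hy : yb = ι q + τ * (xb - ι p) := by
      rw [hτdef]
      field_simp
      ring
    have hrelx : ι a * xb ^ 2 + ι b * (ι q + τ * (xb - ι p)) ^ 2 = 1 := by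
      rw [← hy]; exact hrel
    have hden : ι a + ι b * τ ^ 2 ≠ 0 := by
      intro hcontra
      have h0 : (ι a + ι b * τ ^ 2) * (xb - ι p) ^ 2 = 0 := by rw [hcontra]; ring
      have h2K : (2 : K) ≠ 0 := by
        intro h
        apply hchar
        apply hι
        rw [map_ofNat, map_zero]
        exact h
      have h1 : ι a * ι p * xb + ι b * ι q * (ι q + τ * (xb - ι p)) = 1 := by
        have h1' : 2 * (ι a * ι p * xb + ι b * ι q * (ι q + τ * (xb - ι p))) = 2 * 1 := by
          linear_combination hrelx + hrel2 - h0
        exact mul_left_cancel₀ h2K h1'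
      have h3 : (ι a * ι p + ι b * ι q * τ) * (xb - ι p) = 0 := by
        linear_combination h1 - hrel2
      have h2 : ι a * ι p + ι b * ι q * τ = 0 :=
        (mul_eq_zero.mp h3).resolve_right hxnp
      by_cases hq : q = 0
      · rw [hq, map_zero] at h2 hrel2
        have hap : ι a * ι p = 0 := by linear_combination h2
        have hp0 : ι p = 0 := (mul_eq_zero.mp hap).resolve_left hιa
        rw [hp0] at hrel2
        simp at hrel2
      · have hqι : ι q ≠ 0 := fun h => hq (hι (h.trans (map_zero ι).symm))
        have key : ι b * ι q ^ 2 * (ι a + ι b * τ ^ 2)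
            = ι a * (ι a * ι p ^ 2 + ι b * ι q ^ 2)
              + (ι b * ι q * τ - ι a * ι p) * (ι a * ι p + ι b * ι q * τ) := by ring
        rw [hcontra, h2, hrel2] at key
        simp at key
        exact hιa key.symm
    have hxX : (ι a + ι b * τ ^ 2) * xb
        = ι b * ι p * τ ^ 2 - 2 * ι b * ι q * τ - ι a * ι p := by
      have key : (xb - ι p) * ((ι a + ι b * τ ^ 2) * xb
          - (ι b * ι p * τ ^ 2 - 2 * ι b * ι q * τ - ι a * ι p)) = 0 := by
        linear_combination hrelx - hrel2
      have := (mul_eq_zero.mp key).resolve_left hxnp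
      linear_combination this
    have hxfrac : xb = (ι b * ι p * τ ^ 2 - 2 * ι b * ι q * τ - ι a * ι p)
        / (ι a + ι b * τ ^ 2) := by
      rw [eq_div_iff hden]
      linear_combination hxX
    have htransτ : Transcendental k τ := by
      intro hτalg
      have hint : IsIntegral k τ := hτalg.isIntegral
      haveI hfd := IntermediateField.adjoin.finiteDimensional hint
      have hτm : τ ∈ IntermediateField.adjoin k ({τ} : Set K) :=
        IntermediateField.mem_adjoin_simple_self k τ
      have hcm : ∀ c : k, ι c ∈ IntermediateField.adjoin k ({τ} : Set K) := fun c => by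
        have := (IntermediateField.adjoin k ({τ} : Set K)).algebraMap_mem c
        rwa [halg] at this
      have h2m : (2 : K) ∈ IntermediateField.adjoin k ({τ} : Set K) := by
        have := hcm 2
        rwa [map_ofNat] at this
      have hmem : xb ∈ IntermediateField.adjoin k ({τ} : Set K) := by
        rw [hxfrac]
        exact div_mem (sub_mem (sub_mem (mul_mem (mul_mem (hcm b) (hcm p)) (pow_mem hτm 2))
          (mul_mem (mul_mem (mul_mem h2m (hcm b)) (hcm q)) hτm))
          (mul_mem (hcm a) (hcm p)))
          (add_mem (hcm a) (mul_mem (hcm b) (pow_mem hτm 2)))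
      apply htransx
      have halgx : IsAlgebraic k (⟨xb, hmem⟩ : IntermediateField.adjoin k ({τ} : Set K)) :=
        (IsIntegral.of_finite k _).isAlgebraic
      exact (IntermediateField.isAlgebraic_iff).mp halgx
    have hginj : Function.Injective ((Polynomial.aeval τ : Polynomial k →ₐ[k] K) :
        Polynomial k →+* K) := transcendental_iff_injective.mp htransτ
    set hlift : RatFunc k →+* K := IsFractionRing.lift hginj with hhlift
    have hhC : ∀ c : k, hlift (RatFunc.C c) = ι c := by
      intro c
      rw [hhlift, ← RatFunc.algebraMap_C, IsFractionRing.lift_algebraMap]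
      simp [halg]
    have hhX : hlift RatFunc.X = τ := by
      rw [hhlift, ← RatFunc.algebraMap_X, IsFractionRing.lift_algebraMap]
      simp
    have hcS : ∀ c : k, ι c ∈ hlift.fieldRange := fun c => ⟨RatFunc.C c, hhC c⟩
    have hτS : τ ∈ hlift.fieldRange := ⟨RatFunc.X, hhX⟩
    have h2S : (2 : K) ∈ hlift.fieldRange := by
      have := hcS 2
      rwa [map_ofNat] at this
    have hxS : xb ∈ hlift.fieldRange := by
      rw [hxfrac]
      exact div_mem (sub_mem (sub_mem (mul_mem (mul_mem (hcS b) (hcS p)) (pow_mem hτS 2))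
        (mul_mem (mul_mem (mul_mem h2S (hcS b)) (hcS q)) hτS)) (mul_mem (hcS a) (hcS p)))
        (add_mem (hcS a) (mul_mem (hcS b) (pow_mem hτS 2)))
    have hyS : yb ∈ hlift.fieldRange := by
      rw [hy]
      exact add_mem (hcS q) (mul_mem hτS (sub_mem hxS (hcS p)))
    have hFS : ∀ s : MvPolynomial (Fin 2) k, F2 s ∈ hlift.fieldRange := by
      intro s
      induction s using MvPolynomial.induction_on with
      | C c => rw [hF2C]; exact hcS c
      | add p1 q1 hp1 hq1 => rw [map_add]; exact add_mem hp1 hq1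
      | mul_X p1 n hp1 =>
        rw [map_mul]
        refine mul_mem hp1 ?_
        fin_cases n
        · exact hxS
        · exact hyS
    have hsurj : Function.Surjective hlift := by
      intro z
      obtain ⟨pz, qz, hq0, hz⟩ := hfrac z
      obtain ⟨ps, rfl⟩ := Ideal.Quotient.mk_surjective pz
      obtain ⟨qs, rfl⟩ := Ideal.Quotient.mk_surjective qz
      have hzS : z ∈ hlift.fieldRange := by
        rw [hz]
        exact div_mem (hFS ps) (hFS qs)
      obtain ⟨w, hw⟩ := hzS
      exact ⟨w, hw⟩
    have hbij : Function.Bijective hlift := ⟨hlift.injective, hsurj⟩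
    refine ⟨(RingEquiv.ofBijective hlift hbij).symm, fun c => ?_⟩
    have hc : (RingEquiv.ofBijective hlift hbij) (RatFunc.C c) = ι c := hhC c
    rw [← hc, RingEquiv.symm_apply_apply]
  · rintro ⟨e, he⟩
    by_cases hfin : Infinite k
    · -- infinite case
      set u := e xb with hu
      set v := e yb with hv
      have hreluv : RatFunc.C a * u ^ 2 + RatFunc.C b * v ^ 2 = 1 := by
        have h := congrArg e hrel
        simpa only [map_add, map_mul, map_pow, map_one, he] using h
      have hW1 : algebraMap (Polynomial k) (RatFunc k) u.denom ≠ 0 :=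
        RatFunc.algebraMap_ne_zero u.denom_ne_zero
      have hW2 : algebraMap (Polynomial k) (RatFunc k) v.denom ≠ 0 :=
        RatFunc.algebraMap_ne_zero v.denom_ne_zero
      have hpoly : Polynomial.C a * (u.num * v.denom) ^ 2
          + Polynomial.C b * (v.num * u.denom) ^ 2 = (u.denom * v.denom) ^ 2 := by
        apply IsFractionRing.injective (Polynomial k) (RatFunc k)
        have hU := RatFunc.num_div_denom u
        have hV := RatFunc.num_div_denom v
        have hU' : algebraMap (Polynomial k) (RatFunc k) u.num
            = u * algebraMap (Polynomial k) (RatFunc k) u.denom :=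
          ((eq_div_iff hW1).mp hU.symm).symm
        have hV' : algebraMap (Polynomial k) (RatFunc k) v.num
            = v * algebraMap (Polynomial k) (RatFunc k) v.denom :=
          ((eq_div_iff hW2).mp hV.symm).symm
        simp only [map_add, map_mul, map_pow, RatFunc.algebraMap_C, hU', hV']
        ring_nf
        linear_combination (algebraMap (Polynomial k) (RatFunc k) u.denom
          * algebraMap (Polynomial k) (RatFunc k) v.denom) ^ 2 * hreluv
      have hWne : u.denom * v.denom ≠ 0 := mul_ne_zero u.denom_ne_zero v.denom_ne_zero
      obtain ⟨c, hc⟩ : ∃ c, Polynomial.eval c (u.denom * v.denom) ≠ 0 := by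
        by_contra h
        push_neg at h
        exact hWne (Polynomial.zero_of_eval_zero _ h)
      refine ⟨Polynomial.eval c (u.num * v.denom) / Polynomial.eval c (u.denom * v.denom),
        Polynomial.eval c (v.num * u.denom) / Polynomial.eval c (u.denom * v.denom), ?_⟩
      have hev := congrArg (Polynomial.eval c) hpoly
      simp only [Polynomial.eval_add, Polynomial.eval_mul, Polynomial.eval_pow,
        Polynomial.eval_C] at hev
      rw [Polynomial.eval_mul] at hc
      have hc1 : Polynomial.eval c u.denom ≠ 0 := left_ne_zero_of_mul hc
      have hc2 : Polynomial.eval c v.denom ≠ 0 := right_ne_zero_of_mul hc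
      simp only [Polynomial.eval_mul]
      field_simp
      linear_combination hev
    · -- finite case
      have hfink : Finite k := not_infinite_iff_finite.mp hfin
      letI := Fintype.ofFinite k
      have hchar2 : ringChar k ≠ 2 := by
        intro h
        apply hchar
        have : CharP k 2 := h ▸ ringChar.charP k
        exact_mod_cast CharP.cast_eq_zero k 2
      have hcard : Fintype.card k % 2 = 1 := FiniteField.odd_card_of_char_ne_two hchar2
      have hdegf : (Polynomial.C a * Polynomial.X ^ 2 : Polynomial k).degree = 2 :=
        Polynomial.degree_C_mul_X_pow 2 ha
      have hdegg : (Polynomial.C b * Polynomial.X ^ 2 - Polynomial.C 1 : Polynomial k).degree = 2 := by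
        have h : (Polynomial.C b * Polynomial.X ^ 2 - Polynomial.C 1 : Polynomial k)
            = Polynomial.C b * Polynomial.X ^ 2 + Polynomial.C 0 * Polynomial.X
              + Polynomial.C (-1) := by
          simp only [map_zero, map_neg, map_one]; ring
        rw [h]
        exact Polynomial.degree_quadratic hb
      obtain ⟨x, y, hxy⟩ := FiniteField.exists_root_sum_quadratic hdegf hdegg hcard
      refine ⟨x, y, ?_⟩
      simp only [Polynomial.eval_add, Polynomial.eval_sub, Polynomial.eval_mul,
        Polynomial.eval_pow, Polynomial.eval_C, Polynomial.eval_X, Polynomial.eval_one] at hxy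
      linear_combination hxy


end
end

section
/- Let k and ℓ be number fields, let a, b ∈ k and c, d ∈ ℓ be nonzero, set K = k_{a,b} and L = ℓ_{c,d}, and let α be a Witt equivalence from K to L. If P is an ordering of k which extends to an ordering of K, then there exists an ordering Q of ℓ which extends to an ordering of L such that for all nonzero r ∈ k and nonzero s ∈ ℓ with α(square class of r in Kˣ/Kˣ²) = (square class of s in Lˣ/Lˣ²), one has r ∈ P if and only if s ∈ Q. -/
open MvPolynomial

noncomputable section

/-- Square classes are equal iff the units differ by a square. -/
lemma sqCl_eq_iff {K : Type*} [Field K] (u v : Kˣ) :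
    sqCl u = sqCl v ↔ ∃ w : Kˣ, v = u * w ^ 2 := by
  show (QuotientGroup.mk u : SqClass K) = QuotientGroup.mk v ↔ _
  rw [QuotientGroup.eq]
  constructor
  · rintro ⟨w, hw⟩
    exact ⟨w, by rw [show (w : Kˣ) ^ 2 = u⁻¹ * v from hw, mul_inv_cancel_left]⟩
  · rintro ⟨w, rfl⟩
    exact ⟨w, by rw [powMonoidHom_apply, inv_mul_cancel_left]⟩

lemma sqCl_neg {K : Type*} [Field K] (u : Kˣ) : sqCl (-u) = sqCl (-1) * sqCl u := by
  show (QuotientGroup.mk (-u) : SqClass K) = QuotientGroup.mk (-1) * QuotientGroup.mk u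
  rw [← QuotientGroup.mk_mul, neg_one_mul]

/-- Every square belongs to an ordering. -/
lemma IsOrdering.sq_mem {F : Type*} [Field F] {P : Set F} (h : IsOrdering P) (x : F) :
    x ^ 2 ∈ P := by
  rcases h.total x with hx | hx
  · simpa [sq] using h.mul_mem x hx x hx
  · simpa [sq] using h.mul_mem _ hx _ hx

lemma IsOrdering.zero_mem {F : Type*} [Field F] {P : Set F} (h : IsOrdering P) :
    (0 : F) ∈ P := by simpa using h.sq_mem 0

/-- Membership in an ordering only depends on the square class. -/
lemma IsOrdering.mem_of_sqCl_eq {F : Type*} [Field F] {P : Set F} (h : IsOrdering P)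
    {u v : Fˣ} (hu : (u : F) ∈ P) (huv : sqCl u = sqCl v) : (v : F) ∈ P := by
  obtain ⟨w, rfl⟩ := (sqCl_eq_iff u v).mp huv
  push_cast
  exact h.mul_mem _ hu _ (h.sq_mem _)

/-- Let `k, ℓ` be number fields, `K = k_{a,b}`, `L = ℓ_{c,d}`, and `α` a Witt equivalence
from `K` to `L`.  If `P` is an ordering of `k` which extends to an ordering of `K`, then
there is an ordering `Q` of `ℓ` which extends to an ordering of `L` such that `α` maps
(the square classes of) positive elements of `P` exactly to positive elements of `Q`. -/
theorem wittEquiv_conic_orderings_correspond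
    (k : Type*) [Field k] [NumberField k] (l : Type*) [Field l] [NumberField l]
    (a b : k) (ha : a ≠ 0) (hb : b ≠ 0) (c d : l) (hc : c ≠ 0) (hd : d ≠ 0)
    (K : Type*) [Field K] (ι : k →+* K) (hK : IsConicFunctionField k a b K ι)
    (L : Type*) [Field L] (ι' : l →+* L) (hL : IsConicFunctionField l c d L ι')
    (α : SqClass K ≃* SqClass L) (hα : IsWittEquiv α)
    (P : Set k) (hP : IsOrdering P)
    (hPext : ∃ P₁ : Set K, IsOrdering P₁ ∧ ι ⁻¹' P₁ = P) :
    ∃ Q : Set l, IsOrdering Q ∧ (∃ Q₁ : Set L, IsOrdering Q₁ ∧ ι' ⁻¹' Q₁ = Q) ∧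
      ∀ (r : kˣ) (s : lˣ),
        α (sqCl (Units.map ι.toMonoidHom r)) = sqCl (Units.map ι'.toMonoidHom s) →
        ((r : k) ∈ P ↔ (s : l) ∈ Q) := by
  obtain ⟨P₁, hP₁, hPeq⟩ := hPext
  -- The candidate ordering of `L`: elements whose square class is the image under `α`
  -- of the square class of a positive element of `K` (together with `0`).
  set Q₁ : Set L := {z : L | z = 0 ∨
      ∃ u : Kˣ, (u : K) ∈ P₁ ∧ ∃ v : Lˣ, (v : L) = z ∧ α (sqCl u) = sqCl v} with hQ₁def
  -- auxiliary: if two positive-image classes differ by `-1`, contradiction.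
  have key : ∀ (u₁ u₂ : Kˣ) (v : Lˣ), (u₁ : K) ∈ P₁ → (u₂ : K) ∈ P₁ →
      α (sqCl u₁) = sqCl v → α (sqCl u₂) = sqCl (-v) → False := by
    intro u₁ u₂ v hu₁ hu₂ h₁ h₂
    have h3 : α (sqCl (-u₁)) = sqCl (-v) := by
      rw [sqCl_neg, map_mul, hα.map_neg_one, h₁, ← sqCl_neg]
    have h4 : sqCl u₂ = sqCl (-u₁) := α.injective (h₂.trans h3.symm)
    have h5 : ((-u₁ : Kˣ) : K) ∈ P₁ := hP₁.mem_of_sqCl_eq hu₂ h4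
    rw [Units.val_neg] at h5
    exact u₁.ne_zero (hP₁.antisymm _ hu₁ h5)
  -- `Q₁` is an ordering of `L`.
  have hQ₁ : IsOrdering Q₁ := by
    constructor
    · -- addition
      rintro z₁ (rfl | ⟨u₁, hu₁, v₁, rfl, h₁⟩) z₂ hz₂
      · simpa using hz₂
      rcases hz₂ with rfl | ⟨u₂, hu₂, v₂, rfl, h₂⟩
      · rw [add_zero]; exact Or.inr ⟨u₁, hu₁, v₁, rfl, h₁⟩
      have hne : (v₁ : L) + (v₂ : L) ≠ 0 := by
        intro h0
        have hv2 : v₂ = -v₁ := by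
          ext; rw [Units.val_neg]; linear_combination h0
        exact key u₁ u₂ v₁ hu₁ hu₂ h₁ (hv2 ▸ h₂)
      refine Or.inr ?_
      set v₃ : Lˣ := Units.mk0 _ hne with hv₃
      obtain ⟨q, hq⟩ := α.surjective (sqCl v₃)
      obtain ⟨u₃, rfl⟩ := QuotientGroup.mk_surjective q
      have hrep := hα.represents u₁ u₂ u₃ v₁ v₂ v₃ h₁ h₂ hq
      obtain ⟨x, y, hxy⟩ := hrep.mpr ⟨1, 1, by simp [hv₃]⟩
      have hu₃ : (u₃ : K) ∈ P₁ := by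
        rw [hxy]
        exact hP₁.add_mem _ (hP₁.mul_mem _ hu₁ _ (hP₁.sq_mem x)) _
          (hP₁.mul_mem _ hu₂ _ (hP₁.sq_mem y))
      exact ⟨u₃, hu₃, v₃, rfl, hq⟩
    · -- multiplication
      rintro z₁ (rfl | ⟨u₁, hu₁, v₁, rfl, h₁⟩) z₂ hz₂
      · exact Or.inl (zero_mul _)
      rcases hz₂ with rfl | ⟨u₂, hu₂, v₂, rfl, h₂⟩
      · exact Or.inl (mul_zero _)
      refine Or.inr ⟨u₁ * u₂, hP₁.mul_mem _ hu₁ _ hu₂, v₁ * v₂, by push_cast; ring, ?_⟩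
      show α (QuotientGroup.mk (u₁ * u₂)) = QuotientGroup.mk (v₁ * v₂)
      rw [QuotientGroup.mk_mul, QuotientGroup.mk_mul, map_mul]
      exact congrArg₂ (· * ·) h₁ h₂
    · -- totality
      intro z
      rcases eq_or_ne z 0 with rfl | hz
      · exact Or.inl (Or.inl rfl)
      obtain ⟨q, hq⟩ := α.surjective (sqCl (Units.mk0 z hz))
      obtain ⟨u, rfl⟩ := QuotientGroup.mk_surjective q
      have hq : α (sqCl u) = sqCl (Units.mk0 z hz) := hq
      rcases hP₁.total (u : K) with hu | hu
      · exact Or.inl (Or.inr ⟨u, hu, Units.mk0 z hz, rfl, hq⟩)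
      · refine Or.inr (Or.inr ⟨-u, by rwa [Units.val_neg], -(Units.mk0 z hz),
          by rw [Units.val_neg]; rfl, ?_⟩)
        rw [sqCl_neg, map_mul, hα.map_neg_one, hq, ← sqCl_neg]
    · -- antisymmetry
      rintro z (rfl | ⟨u₁, hu₁, v₁, rfl, h₁⟩) hneg
      · rfl
      rcases hneg with h0 | ⟨u₂, hu₂, v₂, hv₂, h₂⟩
      · simpa using h0
      exfalso
      have hv₂' : v₂ = -v₁ := by ext; rw [Units.val_neg, hv₂]
      exact key u₁ u₂ v₁ hu₁ hu₂ h₁ (hv₂' ▸ h₂)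
  refine ⟨ι' ⁻¹' Q₁, ?_, ⟨Q₁, hQ₁, rfl⟩, ?_⟩
  · constructor
    · intro x hx y hy
      show ι' (x + y) ∈ Q₁
      rw [map_add]; exact hQ₁.add_mem _ hx _ hy
    · intro x hx y hy
      show ι' (x * y) ∈ Q₁
      rw [map_mul]; exact hQ₁.mul_mem _ hx _ hy
    · intro x
      rcases hQ₁.total (ι' x) with h | h
      · exact Or.inl h
      · exact Or.inr (show ι' (-x) ∈ Q₁ by rwa [map_neg])
    · intro x hx hnx
      have : ι' (-x) ∈ Q₁ := hnx
      rw [map_neg] at this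
      exact ι'.injective (by rw [map_zero]; exact hQ₁.antisymm _ hx this)
  · intro r s hrs
    have hcoeK : ((Units.map ι.toMonoidHom r : Kˣ) : K) = ι r := rfl
    have hcoeL : ((Units.map ι'.toMonoidHom s : Lˣ) : L) = ι' s := rfl
    constructor
    · intro hr
      have hrP₁ : ι (r : k) ∈ P₁ := by rw [← hPeq] at hr; exact hr
      exact Or.inr ⟨Units.map ι.toMonoidHom r, hrP₁, Units.map ι'.toMonoidHom s, rfl, hrs⟩
    · intro hs
      rcases hs with h0 | ⟨u, hu, v, hv, hαu⟩
      · exact absurd h0 ((Units.map ι'.toMonoidHom s).ne_zero)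
      have hv' : v = Units.map ι'.toMonoidHom s := by ext; exact hv
      have : sqCl u = sqCl (Units.map ι.toMonoidHom r) :=
        α.injective (by rw [hαu, hv', hrs])
      have hrP₁ : ((Units.map ι.toMonoidHom r : Kˣ) : K) ∈ P₁ :=
        hP₁.mem_of_sqCl_eq hu this
      rw [← hPeq]
      exact hrP₁

end
end

section
/- Let a, b, c, d ∈ ℝ be nonzero. If the fields ℝ_{a,b} and ℝ_{c,d} are Witt equivalent, then the quaternion algebras (a,b/ℝ) and (c,d/ℝ) are isomorphic as ℝ-algebras (equivalently, they are either both split or both non-split over ℝ). -/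
set_option synthInstance.maxHeartbeats 1000000
set_option maxHeartbeats 1600000


open MvPolynomial

noncomputable section

section QuaternionAux
open Quaternion QuaternionAlgebra


lemma liftHom_i {a b : ℝ} {A : Type*} [Ring A] [Algebra ℝ A]
    (q : QuaternionAlgebra.Basis A a 0 b) :
    q.liftHom (Basis.self ℝ).i = q.i := by
  simp [Basis.liftHom, Basis.lift]

lemma liftHom_j {a b : ℝ} {A : Type*} [Ring A] [Algebra ℝ A]
    (q : QuaternionAlgebra.Basis A a 0 b) :
    q.liftHom (Basis.self ℝ).j = q.j := by
  simp [Basis.liftHom, Basis.lift]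

lemma liftHom_k {a b : ℝ} {A : Type*} [Ring A] [Algebra ℝ A]
    (q : QuaternionAlgebra.Basis A a 0 b) :
    q.liftHom (Basis.self ℝ).k = q.k := by
  simp [Basis.liftHom, Basis.lift]

def quatAlgEquiv {a b c d : ℝ} (q : QuaternionAlgebra.Basis ℍ[ℝ,c,d] a 0 b)
    (q' : QuaternionAlgebra.Basis ℍ[ℝ,a,b] c 0 d)
    (h1 : q.liftHom q'.i = (Basis.self ℝ).i) (h2 : q.liftHom q'.j = (Basis.self ℝ).j)
    (h3 : q'.liftHom q.i = (Basis.self ℝ).i) (h4 : q'.liftHom q.j = (Basis.self ℝ).j) :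
    ℍ[ℝ,a,b] ≃ₐ[ℝ] ℍ[ℝ,c,d] :=
  AlgEquiv.ofAlgHom q.liftHom q'.liftHom
    (QuaternionAlgebra.hom_ext
      (by simp only [AlgHom.coe_comp, Function.comp_apply, AlgHom.id_apply, liftHom_i]; exact h1)
      (by simp only [AlgHom.coe_comp, Function.comp_apply, AlgHom.id_apply, liftHom_j]; exact h2))
    (QuaternionAlgebra.hom_ext
      (by simp only [AlgHom.coe_comp, Function.comp_apply, AlgHom.id_apply, liftHom_i]; exact h3)
      (by simp only [AlgHom.coe_comp, Function.comp_apply, AlgHom.id_apply, liftHom_j]; exact h4))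

lemma lift_mk {a b : ℝ} {A : Type*} [Ring A] [Algebra ℝ A]
    (q : QuaternionAlgebra.Basis A a 0 b) (r x y z : ℝ) :
    q.lift ⟨r,x,y,z⟩ = algebraMap ℝ A r + x • q.i + y • q.j + z • q.k := rfl

@[simps i j k] def scaleBasis (a b u v : ℝ) : QuaternionAlgebra.Basis ℍ[ℝ,a,b] (u^2*a) 0 (v^2*b) where
  i := ⟨0,u,0,0⟩
  j := ⟨0,0,v,0⟩
  k := ⟨0,0,0,u*v⟩
  i_mul_i := by ext <;> simp <;> ring
  j_mul_j := by ext <;> simp <;> ring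
  i_mul_j := by ext <;> simp <;> ring
  j_mul_i := by ext <;> simp <;> ring

@[simps i j k] def scaleBasis' (a b u v : ℝ) (hu : u ≠ 0) (hv : v ≠ 0) :
    QuaternionAlgebra.Basis ℍ[ℝ,u^2*a,v^2*b] a 0 b where
  i := ⟨0,u⁻¹,0,0⟩
  j := ⟨0,0,v⁻¹,0⟩
  k := ⟨0,0,0,u⁻¹*v⁻¹⟩
  i_mul_i := by ext <;> simp <;> field_simp <;> ring
  j_mul_j := by ext <;> simp <;> field_simp <;> ring
  i_mul_j := by ext <;> simp <;> ring
  j_mul_i := by ext <;> simp <;> ring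

def scaleEquiv (a b u v : ℝ) (hu : u ≠ 0) (hv : v ≠ 0) :
    ℍ[ℝ,u^2*a,v^2*b] ≃ₐ[ℝ] ℍ[ℝ,a,b] :=
  quatAlgEquiv (scaleBasis a b u v) (scaleBasis' a b u v hu hv)
    (by ext <;> simp [Basis.liftHom, lift_mk, scaleBasis, scaleBasis'] <;> field_simp)
    (by ext <;> simp [Basis.liftHom, lift_mk, scaleBasis, scaleBasis'] <;> field_simp)
    (by ext <;> simp [Basis.liftHom, lift_mk, scaleBasis, scaleBasis'] <;> field_simp)
    (by ext <;> simp [Basis.liftHom, lift_mk, scaleBasis, scaleBasis'] <;> field_simp)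

@[simps i j k] def swapBasis (a b : ℝ) : QuaternionAlgebra.Basis ℍ[ℝ,b,a] a 0 b where
  i := ⟨0,0,1,0⟩
  j := ⟨0,1,0,0⟩
  k := ⟨0,0,0,-1⟩
  i_mul_i := by ext <;> simp
  j_mul_j := by ext <;> simp
  i_mul_j := by ext <;> simp
  j_mul_i := by ext <;> simp

def swapEquiv (a b : ℝ) : ℍ[ℝ,a,b] ≃ₐ[ℝ] ℍ[ℝ,b,a] :=
  quatAlgEquiv (swapBasis a b) (swapBasis b a)
    (by ext <;> simp [Basis.liftHom, lift_mk, swapBasis])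
    (by ext <;> simp [Basis.liftHom, lift_mk, swapBasis])
    (by ext <;> simp [Basis.liftHom, lift_mk, swapBasis])
    (by ext <;> simp [Basis.liftHom, lift_mk, swapBasis])

@[simps i j k] def splitBasis1 : QuaternionAlgebra.Basis ℍ[ℝ,(1:ℝ),(1:ℝ)] (1:ℝ) 0 (-1:ℝ) where
  i := ⟨0,1,0,0⟩
  j := ⟨0,0,0,1⟩
  k := ⟨0,0,1,0⟩
  i_mul_i := by ext <;> simp
  j_mul_j := by ext <;> simp
  i_mul_j := by ext <;> simp
  j_mul_i := by ext <;> simp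

@[simps i j k] def splitBasis2 : QuaternionAlgebra.Basis ℍ[ℝ,(1:ℝ),(-1:ℝ)] (1:ℝ) 0 (1:ℝ) where
  i := ⟨0,1,0,0⟩
  j := ⟨0,0,0,1⟩
  k := ⟨0,0,1,0⟩
  i_mul_i := by ext <;> simp
  j_mul_j := by ext <;> simp
  i_mul_j := by ext <;> simp
  j_mul_i := by ext <;> simp

def splitEquiv : ℍ[ℝ,(1:ℝ),(-1:ℝ)] ≃ₐ[ℝ] ℍ[ℝ,(1:ℝ),(1:ℝ)] :=
  quatAlgEquiv splitBasis1 splitBasis2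
    (by ext <;> simp [Basis.liftHom, lift_mk, splitBasis1, splitBasis2])
    (by ext <;> simp [Basis.liftHom, lift_mk, splitBasis1, splitBasis2])
    (by ext <;> simp [Basis.liftHom, lift_mk, splitBasis1, splitBasis2])
    (by ext <;> simp [Basis.liftHom, lift_mk, splitBasis1, splitBasis2])

lemma quatNormalize (a b : ℝ) (ha : a ≠ 0) (hb : b ≠ 0) :
    Nonempty (ℍ[ℝ,a,b] ≃ₐ[ℝ] ℍ[ℝ, (if a < 0 then (-1:ℝ) else 1), (if b < 0 then (-1:ℝ) else 1)]) := by
  set sa : ℝ := if a < 0 then (-1:ℝ) else 1 with hsa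
  set sb : ℝ := if b < 0 then (-1:ℝ) else 1 with hsb
  have hu : Real.sqrt |a| ≠ 0 := by positivity
  have hv : Real.sqrt |b| ≠ 0 := by positivity
  have h1 : (Real.sqrt |a|)^2 * sa = a := by
    rw [Real.sq_sqrt (abs_nonneg a), hsa]
    rcases lt_or_ge a 0 with h|h
    · simp [h, abs_of_neg h]
    · simp [not_lt.2 h, abs_of_nonneg h]
  have h2 : (Real.sqrt |b|)^2 * sb = b := by
    rw [Real.sq_sqrt (abs_nonneg b), hsb]
    rcases lt_or_ge b 0 with h|h
    · simp [h, abs_of_neg h]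
    · simp [not_lt.2 h, abs_of_nonneg h]
  rw [← h1, ← h2]
  exact ⟨scaleEquiv sa sb _ _ hu hv⟩

lemma quatClass (a b : ℝ) (ha : a ≠ 0) (hb : b ≠ 0) :
    Nonempty (ℍ[ℝ,a,b] ≃ₐ[ℝ]
      ℍ[ℝ, (if a < 0 ∧ b < 0 then (-1:ℝ) else 1), (if a < 0 ∧ b < 0 then (-1:ℝ) else 1)]) := by
  obtain ⟨e⟩ := quatNormalize a b ha hb
  rcases lt_or_ge a 0 with hA|hA <;> rcases lt_or_ge b 0 with hB|hB
  · rw [if_pos hA, if_pos hB] at e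
    rw [if_pos (show a < 0 ∧ b < 0 from ⟨hA, hB⟩)]
    exact ⟨e⟩
  · have hno : ¬(a < 0 ∧ b < 0) := fun h => absurd h.2 (not_lt.2 hB)
    rw [if_pos hA, if_neg (not_lt.2 hB)] at e
    rw [if_neg hno]
    exact ⟨e.trans ((_root_.swapEquiv (-1:ℝ) 1).trans splitEquiv)⟩
  · have hno : ¬(a < 0 ∧ b < 0) := fun h => absurd h.1 (not_lt.2 hA)
    rw [if_neg (not_lt.2 hA), if_pos hB] at e
    rw [if_neg hno]
    exact ⟨e.trans splitEquiv⟩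
  · have hno : ¬(a < 0 ∧ b < 0) := fun h => absurd h.1 (not_lt.2 hA)
    rw [if_neg (not_lt.2 hA), if_neg (not_lt.2 hB)] at e
    rw [if_neg hno]
    exact ⟨e⟩

lemma quatIsoOfSign (a b c d : ℝ) (ha : a ≠ 0) (hb : b ≠ 0) (hc : c ≠ 0) (hd : d ≠ 0)
    (h : (a < 0 ∧ b < 0) ↔ (c < 0 ∧ d < 0)) :
    Nonempty (ℍ[ℝ,a,b] ≃ₐ[ℝ] ℍ[ℝ,c,d]) := by
  obtain ⟨e1⟩ := quatClass a b ha hb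
  obtain ⟨e2⟩ := quatClass c d hc hd
  have hcond : (if a < 0 ∧ b < 0 then (-1:ℝ) else 1) = (if c < 0 ∧ d < 0 then (-1:ℝ) else 1) := by
    by_cases hP : a < 0 ∧ b < 0
    · rw [if_pos hP, if_pos (h.1 hP)]
    · rw [if_neg hP, if_neg (fun hQ => hP (h.2 hQ))]
  rw [hcond] at e1
  exact ⟨e1.trans e2.symm⟩

end QuaternionAux

section ConicAux

lemma conic_relation {k : Type*} [Field k] (a b : k) :
    (Ideal.Quotient.mk (Ideal.span {conicPoly k a b})) (C a) *
      (Ideal.Quotient.mk _ (X 0))^2 +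
    (Ideal.Quotient.mk _ (C b)) * (Ideal.Quotient.mk _ (X 1))^2 = 1 := by
  have h1 : (Ideal.Quotient.mk (Ideal.span {conicPoly k a b})) (conicPoly k a b) = 0 :=
    Ideal.Quotient.eq_zero_iff_mem.2 (Ideal.subset_span rfl)
  have := h1
  unfold conicPoly at this
  rw [map_sub, map_add, map_mul, map_mul, map_pow, map_pow, map_one, sub_eq_zero] at this
  exact this

lemma algebraMap_conicRing {k : Type*} [Field k] (a b : k) (r : k) :
    algebraMap k (ConicRing k a b) r = Ideal.Quotient.mk _ (C r) := rfl

/-- If a<0 and b<0 then -1 is a sum of two squares in the function field. -/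
lemma neg_one_sum_sq {a b : ℝ} (ha : a < 0) (hb : b < 0)
    {K : Type*} [Field K] {ι : ℝ →+* K} (hK : IsConicFunctionField ℝ a b K ι) :
    ∃ x y : K, (-1 : K) = x^2 + y^2 := by
  obtain ⟨f, finj, hcomp, hfrac⟩ := hK
  have hιa : f (Ideal.Quotient.mk _ (C a)) = ι a := by
    rw [← algebraMap_conicRing a b a, ← RingHom.comp_apply, hcomp]
  have hιb : f (Ideal.Quotient.mk _ (C b)) = ι b := by
    rw [← algebraMap_conicRing a b b, ← RingHom.comp_apply, hcomp]
  have hrel : ι a * (f (Ideal.Quotient.mk _ (X 0)))^2 + ι b * (f (Ideal.Quotient.mk _ (X 1)))^2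
      = 1 := by
    have := congrArg f (conic_relation a b)
    rw [map_add, map_mul, map_mul, map_pow, map_pow, map_one, hιa, hιb] at this
    exact this
  set x0 := f (Ideal.Quotient.mk _ (X 0))
  set x1 := f (Ideal.Quotient.mk _ (X 1))
  have hra : ι a = -(ι (Real.sqrt (-a)))^2 := by
    rw [← map_pow, Real.sq_sqrt (by linarith), ← map_neg]
    ring_nf
  have hrb : ι b = -(ι (Real.sqrt (-b)))^2 := by
    rw [← map_pow, Real.sq_sqrt (by linarith), ← map_neg]
    ring_nf
  refine ⟨ι (Real.sqrt (-a)) * x0, ι (Real.sqrt (-b)) * x1, ?_⟩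
  rw [hra, hrb] at hrel
  linear_combination hrel
open Polynomial in
/-- Clearing: evaluation of a polynomial identity. -/
def PhiH (a b : ℝ) : MvPolynomial (Fin 2) ℝ →+* Polynomial (Polynomial ℝ) :=
  MvPolynomial.eval₂Hom ((Polynomial.C : (Polynomial ℝ) →+* Polynomial (Polynomial ℝ)).comp
    (Polynomial.C : ℝ →+* Polynomial ℝ)) ![Polynomial.C Polynomial.X, Polynomial.X]

def PsiH (a b : ℝ) : Polynomial (Polynomial ℝ) →+* MvPolynomial (Fin 2) ℝ :=
  Polynomial.eval₂RingHom
    (Polynomial.eval₂RingHom (MvPolynomial.C : ℝ →+* MvPolynomial (Fin 2) ℝ)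
      (MvPolynomial.X 0)) (MvPolynomial.X 1)

lemma PsiH_PhiH (a b : ℝ) (p : MvPolynomial (Fin 2) ℝ) : PsiH a b (PhiH a b p) = p := by
  have : (PsiH a b).comp (PhiH a b) = RingHom.id _ := by
    apply MvPolynomial.ringHom_ext
    · intro r
      simp [PhiH, PsiH]
    · intro i
      fin_cases i <;> simp [PhiH, PsiH]
  exact RingHom.congr_fun this p

/-- x-coordinate of the parametrization. -/
def xc (a b t : ℝ) : ℝ := (Real.sqrt a)⁻¹ * ((1 - b*t^2)/(1 + b*t^2))
def yc (b t : ℝ) : ℝ := 2*t/(1 + b*t^2)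

lemma conic_point (a b t : ℝ) (ha : 0 < a) (ht : 1 + b*t^2 ≠ 0) :
    a * (xc a b t)^2 + b * (yc b t)^2 = 1 := by
  have hsa : (Real.sqrt a) ^ 2 = a := Real.sq_sqrt ha.le
  have hsa' : Real.sqrt a ≠ 0 := by positivity
  rw [xc, yc]
  field_simp
  linear_combination (-(1-b*t^2)^2) * hsa

def gP (a b : ℝ) : Polynomial (Polynomial ℝ) :=
  Polynomial.X^2 + Polynomial.C (Polynomial.C b⁻¹ * (Polynomial.C a * Polynomial.X^2 - 1))

lemma gP_monic (a b : ℝ) : (gP a b).Monic := by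
  apply Polynomial.monic_X_pow_add
  exact lt_of_le_of_lt (Polynomial.degree_C_le) (by norm_num)

lemma gP_degree (a b : ℝ) : (gP a b).degree = 2 :=
  Polynomial.degree_X_pow_add_C (by norm_num) _

lemma PhiH_conicPoly (a b : ℝ) (hb : b ≠ 0) :
    PhiH a b (conicPoly ℝ a b) = Polynomial.C (Polynomial.C b) * gP a b := by
  have hbb : (Polynomial.C (b:ℝ)) * (Polynomial.C b⁻¹) = 1 := by
    rw [← map_mul, mul_inv_cancel₀ hb, map_one]
  unfold conicPoly gP PhiH
  simp only [map_sub, map_add, map_mul, map_pow, map_one, MvPolynomial.eval₂Hom_X']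
  simp only [MvPolynomial.eval₂Hom_C, RingHom.coe_comp, Function.comp_apply,
    Matrix.cons_val_zero, Matrix.cons_val_one, Matrix.head_cons]
  have hbb2 : Polynomial.C (Polynomial.C b) * Polynomial.C (Polynomial.C b⁻¹)
      = (1 : Polynomial (Polynomial ℝ)) := by
    rw [← map_mul, ← map_mul, mul_inv_cancel₀ hb]; simp
  linear_combination (1 - Polynomial.C (Polynomial.C a) * Polynomial.C Polynomial.X ^ 2) * hbb2

open Polynomial in
def evH (x y : ℝ) : Polynomial (Polynomial ℝ) →+* ℝ :=
  (Polynomial.evalRingHom x).comp (Polynomial.evalRingHom (Polynomial.C y))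

lemma evH_PhiH (a b x y : ℝ) (p : MvPolynomial (Fin 2) ℝ) :
    evH x y (PhiH a b p) = MvPolynomial.eval ![x, y] p := by
  have : (evH x y).comp (PhiH a b) = (MvPolynomial.eval ![x, y] : _ →+* ℝ) := by
    apply MvPolynomial.ringHom_ext
    · intro r
      simp [PhiH, evH]
    · intro i
      fin_cases i <;> simp [PhiH, evH]
  exact RingHom.congr_fun this p

lemma evH_gP (a b t : ℝ) (ha : 0 < a) (hb : b ≠ 0) (ht : 1 + b*t^2 ≠ 0) :
    evH (xc a b t) (yc b t) (gP a b) = 0 := by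
  have h := conic_point a b t ha ht
  simp only [gP, evH, map_add, map_pow, map_mul, map_sub, map_one, RingHom.coe_comp,
    Function.comp_apply, Polynomial.coe_evalRingHom, Polynomial.eval_C, Polynomial.eval_X]
  have hbb : b * b⁻¹ = 1 := mul_inv_cancel₀ hb
  field_simp
  linear_combination h

lemma xc_injOn (a b : ℝ) (ha : 0 < a) (hb : b ≠ 0) :
    Set.InjOn (fun t => xc a b t) {t : ℝ | 0 < t ∧ 1 + b*t^2 ≠ 0} := by
  intro s hs t ht h
  simp only [Set.mem_setOf_eq] at hs ht
  simp only [xc] at h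
  have h0 : Real.sqrt a ≠ 0 := by positivity
  have h2 : (1 - b*s^2)/(1 + b*s^2) = (1 - b*t^2)/(1 + b*t^2) :=
    mul_left_cancel₀ (inv_ne_zero h0) h
  rw [div_eq_div_iff hs.2 ht.2] at h2
  have h6 : b * (t^2 - s^2) * 2 = 0 := by linear_combination h2
  have h7 : (s - t) * (s + t) = 0 := by
    rcases mul_eq_zero.1 h6 with h' | h'
    · rcases mul_eq_zero.1 h' with h'' | h''
      · exact absurd h'' hb
      · linear_combination -h''
    · norm_num at h'
  rcases mul_eq_zero.1 h7 with h' | h'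
  · linarith
  · linarith [hs.1, ht.1]

lemma validSet_infinite (b : ℝ) (hb : b ≠ 0) :
    Set.Infinite {t : ℝ | 0 < t ∧ 1 + b*t^2 ≠ 0} := by
  have hbad : Set.Finite {t : ℝ | 1 + b*t^2 = 0} := by
    have hpoly : (Polynomial.C b * Polynomial.X^2 + 1 : Polynomial ℝ) ≠ 0 := by
      intro h
      have := congrArg (fun p => Polynomial.coeff p 2) h
      simp [Polynomial.coeff_one] at this
      exact hb this
    have := Polynomial.finite_setOf_isRoot hpoly
    apply Set.Finite.subset this
    intro t ht
    simp only [Set.mem_setOf_eq, Polynomial.IsRoot, Polynomial.eval_add, Polynomial.eval_mul,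
      Polynomial.eval_pow, Polynomial.eval_C, Polynomial.eval_X, Polynomial.eval_one]
    simp only [Set.mem_setOf_eq] at ht
    linarith [ht]
  have : Set.Infinite (Set.Ioi (0:ℝ) \ {t : ℝ | 1 + b*t^2 = 0}) :=
    (Set.Ioi_infinite 0).diff hbad
  apply this.mono
  intro t ht
  exact ⟨ht.1, fun h => ht.2 h⟩

/-- KEY: a polynomial vanishing on the (parametrized part of the) conic is divisible by
the conic polynomial. -/
lemma key_dvd (a b : ℝ) (ha : 0 < a) (hb : b ≠ 0) (S : MvPolynomial (Fin 2) ℝ)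
    (h : ∀ t : ℝ, 1 + b*t^2 ≠ 0 → MvPolynomial.eval ![xc a b t, yc b t] S = 0) :
    conicPoly ℝ a b ∣ S := by
  set G := PhiH a b S with hG
  set g := gP a b with hg
  have hmon : g.Monic := gP_monic a b
  set r := G %ₘ g with hr
  -- evaluations of r vanish
  have hev : ∀ t : ℝ, 1 + b*t^2 ≠ 0 → evH (xc a b t) (yc b t) r = 0 := by
    intro t ht
    have hdecomp : G %ₘ g + g * (G /ₘ g) = G := Polynomial.modByMonic_add_div G g
    have h1 : evH (xc a b t) (yc b t) (G %ₘ g) + evH (xc a b t) (yc b t) (g * (G /ₘ g))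
        = evH (xc a b t) (yc b t) G := by rw [← map_add, hdecomp]
    rw [map_mul, evH_gP a b t ha hb ht, zero_mul, add_zero] at h1
    rw [← hr] at h1
    rw [h1, hG, evH_PhiH, h t ht]
  -- r = C r0 + C r1 * Y with polynomial coefficients
  have hdeg : r.degree ≤ 1 := by
    have := Polynomial.degree_modByMonic_lt G hmon
    rw [← hr, gP_degree a b] at this
    exact Order.le_of_lt_succ (by exact_mod_cast this)
  have hform : r = Polynomial.C (r.coeff 1) * Polynomial.X + Polynomial.C (r.coeff 0) :=
    Polynomial.eq_X_add_C_of_degree_le_one hdeg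
  set p1 := r.coeff 1
  set p0 := r.coeff 0
  have heval : ∀ t : ℝ, 1 + b*t^2 ≠ 0 →
      p1.eval (xc a b t) * yc b t + p0.eval (xc a b t) = 0 := by
    intro t ht
    have := hev t ht
    rw [hform] at this
    simpa [evH] using this
  -- symmetry t ↦ -t
  have heven : ∀ t : ℝ, xc a b (-t) = xc a b t := by
    intro t; simp [xc]
  have hodd : ∀ t : ℝ, yc b (-t) = - yc b t := by
    intro t; rw [yc, yc]; ring_nf
  have hvalneg : ∀ t : ℝ, 1 + b*t^2 ≠ 0 → 1 + b*(-t)^2 ≠ 0 := by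
    intro t ht; rw [neg_pow]; simpa using ht
  have hp0 : ∀ t : ℝ, 1 + b*t^2 ≠ 0 → p0.eval (xc a b t) = 0 := by
    intro t ht
    have h1 := heval t ht
    have h2 := heval (-t) (hvalneg t ht)
    rw [heven, hodd] at h2
    linarith
  have hp1 : ∀ t : ℝ, 0 < t → 1 + b*t^2 ≠ 0 → p1.eval (xc a b t) = 0 := by
    intro t ht0 ht
    have h1 := heval t ht
    have hy : yc b t ≠ 0 := by
      rw [yc]
      exact div_ne_zero (by linarith) ht
    have h2 := hp0 t ht
    rw [h2, add_zero] at h1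
    exact (mul_eq_zero.1 h1).resolve_right hy
  -- infinitely many roots
  have hTinf := validSet_infinite b hb
  have hinj := xc_injOn a b ha hb
  have himg : Set.Infinite ((fun t => xc a b t) '' {t : ℝ | 0 < t ∧ 1 + b*t^2 ≠ 0}) :=
    hTinf.image hinj
  have hp0z : p0 = 0 := by
    apply Polynomial.eq_zero_of_infinite_isRoot
    apply himg.mono
    rintro x ⟨t, ⟨ht0, ht⟩, rfl⟩
    exact hp0 t ht
  have hp1z : p1 = 0 := by
    apply Polynomial.eq_zero_of_infinite_isRoot
    apply himg.mono
    rintro x ⟨t, ⟨ht0, ht⟩, rfl⟩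
    exact hp1 t ht0 ht
  have hrz : r = 0 := by rw [hform, hp0z, hp1z]; simp
  have hdvd : g ∣ G := (Polynomial.modByMonic_eq_zero_iff_dvd hmon).1 (by rw [← hr, hrz])
  obtain ⟨q, hq⟩ := hdvd
  -- transport back
  have hS : S = PsiH a b g * PsiH a b q := by
    have := congrArg (PsiH a b) hq
    rw [map_mul] at this
    rw [← this, hG, PsiH_PhiH]
  have hconic : conicPoly ℝ a b = MvPolynomial.C b * PsiH a b g := by
    have h1 : PsiH a b (PhiH a b (conicPoly ℝ a b)) = conicPoly ℝ a b := PsiH_PhiH a b _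
    rw [PhiH_conicPoly a b hb, map_mul] at h1
    rw [← h1]
    congr 1
    simp [PsiH]
  refine ⟨MvPolynomial.C b⁻¹ * PsiH a b q, ?_⟩
  rw [hS, hconic]
  have : MvPolynomial.C b * MvPolynomial.C b⁻¹ = (1 : MvPolynomial (Fin 2) ℝ) := by
    rw [← map_mul, mul_inv_cancel₀ hb, map_one]
  linear_combination (-(PsiH a b g * PsiH a b q)) * this

lemma eval_conicPoly (a b x y : ℝ) :
    MvPolynomial.eval ![x, y] (conicPoly ℝ a b) = a * x^2 + b * y^2 - 1 := by
  simp [conicPoly]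

/-- If a > 0 then -1 is not a sum of two squares in the conic function field. -/
lemma not_neg_one_sum_sq {a b : ℝ} (ha : 0 < a) (hb : b ≠ 0)
    {K : Type*} [Field K] {ι : ℝ →+* K} (hK : IsConicFunctionField ℝ a b K ι) :
    ¬ ∃ x y : K, (-1 : K) = x^2 + y^2 := by
  rintro ⟨x, y, hxy⟩
  obtain ⟨f, finj, hcomp, hfrac⟩ := hK
  obtain ⟨p, q, hq, hx⟩ := hfrac x
  obtain ⟨p', q', hq', hy⟩ := hfrac y
  -- the relation (p q')² + (p' q)² + (q q')² = 0 in the conic ring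
  have hrel : (p * q')^2 + (p' * q)^2 + (q * q')^2 = 0 := by
    apply finj
    rw [map_zero, map_add, map_add, map_pow, map_pow, map_pow, map_mul, map_mul, map_mul]
    have : (f p * f q')^2 + (f p' * f q)^2 + (f q * f q')^2
        = (f q * f q')^2 * (x^2 + y^2 + 1) := by
      rw [hx, hy]
      field_simp
    rw [this, ← hxy]
    ring_nf
  -- lift to polynomials
  obtain ⟨A, hA⟩ := Ideal.Quotient.mk_surjective (I := Ideal.span {conicPoly ℝ a b}) (p * q')
  obtain ⟨B, hB⟩ := Ideal.Quotient.mk_surjective (I := Ideal.span {conicPoly ℝ a b}) (p' * q)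
  obtain ⟨S, hS⟩ := Ideal.Quotient.mk_surjective (I := Ideal.span {conicPoly ℝ a b}) (q * q')
  have hmem : A^2 + B^2 + S^2 ∈ Ideal.span {conicPoly ℝ a b} := by
    rw [← Ideal.Quotient.eq_zero_iff_mem, map_add, map_add, map_pow, map_pow, map_pow,
      hA, hB, hS]
    exact hrel
  obtain ⟨h, hh⟩ := Ideal.mem_span_singleton'.1 hmem
  -- evaluate at the conic points
  have hevS : ∀ t : ℝ, 1 + b*t^2 ≠ 0 → MvPolynomial.eval ![xc a b t, yc b t] S = 0 := by
    intro t ht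
    have h1 := congrArg (MvPolynomial.eval ![xc a b t, yc b t]) hh
    rw [map_add, map_add, map_pow, map_pow, map_pow, map_mul, eval_conicPoly] at h1
    have h2 : a * xc a b t^2 + b * yc b t^2 - 1 = 0 := by
      have := conic_point a b t ha ht
      linarith
    rw [h2, mul_zero] at h1
    have h3 : (MvPolynomial.eval ![xc a b t, yc b t] S)^2 = 0 := by
      nlinarith [sq_nonneg (MvPolynomial.eval ![xc a b t, yc b t] A),
        sq_nonneg (MvPolynomial.eval ![xc a b t, yc b t] B),
        sq_nonneg (MvPolynomial.eval ![xc a b t, yc b t] S)]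
    exact pow_eq_zero_iff (two_ne_zero) |>.1 h3
  have hdvd := key_dvd a b ha hb S hevS
  have hSz : (Ideal.Quotient.mk (Ideal.span {conicPoly ℝ a b})) S = 0 :=
    Ideal.Quotient.eq_zero_iff_mem.2 (Ideal.mem_span_singleton.2 hdvd)
  rw [hS] at hSz
  have : f (q * q') = 0 := by rw [hSz, map_zero]
  rw [map_mul] at this
  exact (mul_ne_zero hq hq') this

lemma rename_conicPoly (a b : ℝ) :
    (MvPolynomial.rename (Equiv.swap (0:Fin 2) 1)) (conicPoly ℝ b a) = conicPoly ℝ a b := by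
  simp only [conicPoly, map_sub, map_add, map_mul, map_pow, map_one,
    MvPolynomial.rename_C, MvPolynomial.rename_X, Equiv.swap_apply_left, Equiv.swap_apply_right]
  ring

def conicSwapHom (a b : ℝ) : ConicRing ℝ b a →+* ConicRing ℝ a b :=
  Ideal.Quotient.lift _
    ((Ideal.Quotient.mk (Ideal.span {conicPoly ℝ a b})).comp
      (MvPolynomial.rename (Equiv.swap (0:Fin 2) 1)).toRingHom)
    (by
      intro x hx
      obtain ⟨c, hc⟩ := Ideal.mem_span_singleton'.1 hx
      rw [← hc]
      simp only [RingHom.coe_comp, Function.comp_apply, AlgHom.toRingHom_eq_coe,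
        RingHom.coe_coe, map_mul]
      rw [rename_conicPoly a b]
      have hz : (Ideal.Quotient.mk (Ideal.span {conicPoly ℝ a b})) (conicPoly ℝ a b) = 0 :=
        Ideal.Quotient.eq_zero_iff_mem.2 (Ideal.subset_span rfl)
      rw [hz, mul_zero])

lemma conicSwapHom_mk (a b : ℝ) (x : MvPolynomial (Fin 2) ℝ) :
    conicSwapHom a b (Ideal.Quotient.mk _ x) =
      Ideal.Quotient.mk _ (MvPolynomial.rename (Equiv.swap (0:Fin 2) 1) x) := by
  rw [conicSwapHom, Ideal.Quotient.lift_mk]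
  rfl

lemma conicSwap_conicSwap (a b : ℝ) (z : ConicRing ℝ a b) :
    conicSwapHom a b (conicSwapHom b a z) = z := by
  obtain ⟨x, rfl⟩ := Ideal.Quotient.mk_surjective z
  rw [conicSwapHom_mk, conicSwapHom_mk, MvPolynomial.rename_rename]
  have h1 : (⇑(Equiv.swap (0:Fin 2) 1) ∘ ⇑(Equiv.swap (0:Fin 2) 1)) = id :=
    funext fun i => Equiv.swap_apply_self _ _ i
  rw [h1, MvPolynomial.rename_id, AlgHom.id_apply]

lemma IsConicFunctionField.swap {a b : ℝ} {K : Type*} [Field K] {ι : ℝ →+* K}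
    (hK : IsConicFunctionField ℝ a b K ι) : IsConicFunctionField ℝ b a K ι := by
  obtain ⟨f, finj, hcomp, hfrac⟩ := hK
  refine ⟨f.comp (conicSwapHom a b), ?_, ?_, ?_⟩
  · intro x y hxy
    simp only [RingHom.coe_comp, Function.comp_apply] at hxy
    have := finj hxy
    have h2 := congrArg (conicSwapHom b a) this
    rwa [conicSwap_conicSwap, conicSwap_conicSwap] at h2
  · ext r
    simp only [RingHom.coe_comp, Function.comp_apply]
    rw [← hcomp]
    simp only [RingHom.coe_comp, Function.comp_apply]
    congr 1
    rw [algebraMap_conicRing, algebraMap_conicRing, conicSwapHom_mk]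
    simp
  · intro z
    obtain ⟨p, q, hq, hz⟩ := hfrac z
    refine ⟨conicSwapHom b a p, conicSwapHom b a q, ?_, ?_⟩
    · simp only [RingHom.coe_comp, Function.comp_apply]
      rw [conicSwap_conicSwap]
      exact hq
    · simp only [RingHom.coe_comp, Function.comp_apply]
      rw [conicSwap_conicSwap, conicSwap_conicSwap]
      exact hz

lemma sum_sq_iff {a b : ℝ} (ha : a ≠ 0) (hb : b ≠ 0) {K : Type*} [Field K] {ι : ℝ →+* K}
    (hK : IsConicFunctionField ℝ a b K ι) :
    (∃ x y : K, (-1:K) = x^2 + y^2) ↔ (a < 0 ∧ b < 0) := by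
  constructor
  · intro h
    by_contra hn
    rcases not_and_or.1 hn with h1 | h1
    · have ha' : 0 < a := lt_of_le_of_ne (not_lt.1 h1) (Ne.symm ha)
      exact not_neg_one_sum_sq ha' hb hK h
    · have hb' : 0 < b := lt_of_le_of_ne (not_lt.1 h1) (Ne.symm hb)
      exact not_neg_one_sum_sq hb' ha hK.swap h
  · rintro ⟨h1, h2⟩
    exact neg_one_sum_sq h1 h2 hK


lemma witt_sum_sq {K L : Type*} [Field K] [Field L] (h : WittEquivalent K L) :
    (∃ x y : K, (-1:K) = x^2 + y^2) ↔ (∃ x y : L, (-1:L) = x^2 + y^2) := by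
  obtain ⟨α, hα⟩ := h
  have h1 : α (sqCl (1:Kˣ)) = sqCl (1:Lˣ) := by
    have e1 : sqCl (1:Kˣ) = 1 := rfl
    have e2 : sqCl (1:Lˣ) = 1 := rfl
    rw [e1, e2, map_one]
  have h2 := hα.represents 1 1 (-1) 1 1 (-1) h1 h1 hα.map_neg_one
  simpa using h2

end ConicAux

open Quaternion in
/-- Let `a, b, c, d ∈ ℝ` be nonzero.  If `ℝ_{a,b}` and `ℝ_{c,d}` are Witt equivalent,
then the quaternion algebras `(a,b/ℝ)` and `(c,d/ℝ)` are isomorphic as `ℝ`-algebras. -/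
theorem wittEquiv_real_conic_implies_quaternion_iso
    (a b c d : ℝ) (ha : a ≠ 0) (hb : b ≠ 0) (hc : c ≠ 0) (hd : d ≠ 0)
    (K : Type*) [Field K] (ι : ℝ →+* K) (hK : IsConicFunctionField ℝ a b K ι)
    (L : Type*) [Field L] (ι' : ℝ →+* L) (hL : IsConicFunctionField ℝ c d L ι')
    (hWE : WittEquivalent K L) :
    Nonempty (ℍ[ℝ, a, b] ≃ₐ[ℝ] ℍ[ℝ, c, d]) := by
  have hiff := witt_sum_sq hWE
  have h1 := sum_sq_iff ha hb hK
  have h2 := sum_sq_iff hc hd hL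
  exact quatIsoOfSign a b c d ha hb hc hd ((h1.symm.trans hiff).trans h2)

end
end
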